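/- arXiv:2509.02829 — 2 statements merged into one kernel-verified Lean document; each statement's English description precedes it below -/
import Mathlib

section
/- If C is a d-dimensional copula and Č_n is its checkerboard approximation at discretization level n, then sup over v in [0,1]^d of |Č_n(v) − C(v)| is at most d/n. -/
open MeasureTheory Real BigOperators

noncomputable def intA (n : ℕ) (j : Fin n) : Set ℝ :=
  if j.val = 0 then Set.Icc 0 (1 / n) else Set.Ioc ((j.val : ℝ) / n) (((j.val : ℝ) + 1) / n)

lemma intA_meas (n : ℕ) (j : Fin n) : MeasurableSet (intA n j) := by
  unfold intA; split <;> measurability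

lemma intA_subset (n : ℕ) (j : Fin n) :
    intA n j ⊆ Set.Icc ((0:ℝ)) (((j.val : ℝ) + 1) / n) := by
  unfold intA; split
  · rename_i h; rw [h]; push_cast; simp
  · rename_i h
    intro x hx
    have hn : (0:ℝ) ≤ (n:ℝ) := Nat.cast_nonneg n
    have h0 : (0:ℝ) ≤ (j.val : ℝ) / n := by positivity
    exact ⟨le_of_lt (lt_of_le_of_lt h0 hx.1), hx.2⟩

lemma intA_vol (n : ℕ) (hn : 0 < n) (j : Fin n) :
    volume (intA n j) = ENNReal.ofReal (1 / n) := by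
  unfold intA; split
  · rw [Real.volume_Icc]; ring_nf
  · rw [Real.volume_Ioc]
    congr 1
    field_simp
    ring

lemma intA_inter_full (n : ℕ) (hn : 0 < n) (j : Fin n) (k : ℕ) (hk : j.val < k) :
    intA n j ∩ Set.Iic ((k:ℝ)/n) = intA n j := by
  apply Set.inter_eq_self_of_subset_left
  intro x hx
  have := (intA_subset n j hx).2
  have h1 : ((j.val:ℝ)+1)/n ≤ (k:ℝ)/n := by
    gcongr
    exact_mod_cast Nat.succ_le_of_lt hk
  exact le_trans this h1

lemma intA_inter_null (n : ℕ) (hn : 0 < n) (j : Fin n) (k : ℕ) (hk : k ≤ j.val) :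
    volume (intA n j ∩ Set.Iic ((k:ℝ)/n)) = 0 := by
  unfold intA
  split
  · rename_i h
    have hk0 : k = 0 := by omega
    subst hk0
    refine measure_mono_null (t := {(0:ℝ)}) ?_ (by simp)
    intro x hx
    simp only [Set.mem_inter_iff, Set.mem_Icc, Set.mem_Iic] at hx
    have : x ≤ 0 := by simpa using hx.2
    simp [le_antisymm this hx.1.1]
  · rename_i h
    have : Set.Ioc ((j.val:ℝ)/n) (((j.val:ℝ)+1)/n) ∩ Set.Iic ((k:ℝ)/n) = ∅ := by
      apply Set.eq_empty_of_forall_notMem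
      intro x hx
      have h1 : (k:ℝ)/n ≤ (j.val:ℝ)/n := by
        gcongr
      exact absurd (le_trans hx.2 h1) (not_le.2 hx.1.1)
    rw [this]; simp

lemma intA_disjoint (n : ℕ) (hn : 0 < n) {a b : Fin n} (hab : a ≠ b) :
    Disjoint (intA n a) (intA n b) := by
  have key : ∀ a b : Fin n, a.val < b.val → Disjoint (intA n a) (intA n b) := by
    intro a b hlt
    rw [Set.disjoint_left]
    intro x hxa hxb
    have h2 : ((a.val:ℝ)+1)/n ≤ (b.val:ℝ)/n := by
      gcongr
      exact_mod_cast Nat.succ_le_of_lt hlt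
    have hxa2 : x ≤ ((a.val:ℝ)+1)/n := (intA_subset n a hxa).2
    have hb1 : b.val ≠ 0 := by omega
    unfold intA at hxb
    rw [if_neg hb1] at hxb
    exact absurd (le_trans hxa2 h2) (not_le.2 hxb.1)
  rcases lt_or_gt_of_ne (Fin.val_ne_of_ne hab) with h | h
  · exact key a b h
  · exact (key b a h).symm

lemma Icc_eq_union (n : ℕ) (hn : 0 < n) (k : ℕ) (hk1 : 1 ≤ k) (hkn : k ≤ n) :
    Set.Icc (0:ℝ) ((k:ℝ)/n) = ⋃ (j : Fin n) (_ : j.val < k), intA n j := by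
  induction k with
  | zero => omega
  | succ k ih =>
    rcases Nat.eq_or_lt_of_le hk1 with h1 | h1
    · -- k + 1 = 1, i.e. k = 0
      have hk0 : k = 0 := by omega
      subst hk0
      ext x
      simp only [Set.mem_iUnion]
      constructor
      · intro hx
        exact ⟨⟨0, hn⟩, by simp, by unfold intA; simpa using hx⟩
      · rintro ⟨j, hj, hx⟩
        have : j.val = 0 := by omega
        unfold intA at hx
        rw [if_pos this] at hx
        simpa using hx
    · have hk1' : 1 ≤ k := by omega
      have ihh := ih hk1' (by omega)
      have hkn' : k < n := by omega
      have hstep : Set.Icc (0:ℝ) (((k:ℕ):ℝ)/n) ∪ intA n ⟨k, hkn'⟩ = Set.Icc (0:ℝ) (((k+1:ℕ):ℝ)/n) := by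
        unfold intA
        rw [if_neg (by simpa using by omega : ¬ (⟨k, hkn'⟩ : Fin n).val = 0)]
        simp only
        rw [Set.Icc_union_Ioc_eq_Icc (by positivity) (by gcongr; push_cast; linarith)]
        congr 1
        push_cast
        ring
      rw [← hstep, ihh]
      ext x
      simp only [Set.mem_iUnion, Set.mem_union]
      constructor
      · rintro (⟨j, hj, hx⟩ | hx)
        · exact ⟨j, by omega, hx⟩
        · exact ⟨⟨k, hkn'⟩, by simp, hx⟩
      · rintro ⟨j, hj, hx⟩
        rcases Nat.lt_or_ge j.val k with h | h
        · exact Or.inl ⟨j, h, hx⟩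
        · have : j = ⟨k, hkn'⟩ := by
            apply Fin.ext; show j.val = k; omega
          subst this
          exact Or.inr hx

noncomputable def box (d n : ℕ) (i : Fin d → Fin n) : Set (Fin d → ℝ) :=
  Set.univ.pi fun ℓ => intA n (i ℓ)

noncomputable def checkDensity (d n : ℕ) (p : (Fin d → Fin n) → ℝ) (v : Fin d → ℝ) : ℝ :=
  (n : ℝ) ^ d * ∑ i : Fin d → Fin n, (box d n i).indicator (fun _ => p i) v

noncomputable def checkMeasure (d n : ℕ) (p : (Fin d → Fin n) → ℝ) :
    Measure (Fin d → ℝ) :=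
  volume.withDensity fun v => ENNReal.ofReal (checkDensity d n p v)

lemma box_meas (d n : ℕ) (i : Fin d → Fin n) : MeasurableSet (box d n i) :=
  MeasurableSet.univ_pi fun ℓ => intA_meas n (i ℓ)

lemma box_disjoint (d n : ℕ) (hn : 0 < n) {i i' : Fin d → Fin n} (h : i ≠ i') :
    Disjoint (box d n i) (box d n i') := by
  obtain ⟨ℓ, hℓ⟩ := Function.ne_iff.1 h
  rw [Set.disjoint_left]
  intro u hu hu'
  exact (intA_disjoint n hn hℓ).le_bot ⟨hu ℓ (by trivial), hu' ℓ (by trivial)⟩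

lemma checkMeasure_apply (d n : ℕ) (p : (Fin d → Fin n) → ℝ) (hp : ∀ i, 0 ≤ p i)
    (S : Set (Fin d → ℝ)) (hS : MeasurableSet S) :
    checkMeasure d n p S
      = ∑ i : Fin d → Fin n, ENNReal.ofReal ((n:ℝ)^d * p i) * volume (box d n i ∩ S) := by
  rw [checkMeasure, withDensity_apply _ hS]
  have hpt : ∀ v, ENNReal.ofReal (checkDensity d n p v)
      = ∑ i : Fin d → Fin n,
          (box d n i).indicator (fun _ => ENNReal.ofReal ((n:ℝ)^d * p i)) v := by
    intro v
    rw [checkDensity, Finset.mul_sum]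
    rw [ENNReal.ofReal_sum_of_nonneg (fun i _ => by
      by_cases hv : v ∈ box d n i
      · rw [Set.indicator_of_mem hv]; exact mul_nonneg (by positivity) (hp i)
      · rw [Set.indicator_of_notMem hv]; simp)]
    refine Finset.sum_congr rfl fun i _ => ?_
    by_cases hv : v ∈ box d n i
    · rw [Set.indicator_of_mem hv, Set.indicator_of_mem hv]
    · rw [Set.indicator_of_notMem hv, Set.indicator_of_notMem hv]
      simp
  simp_rw [hpt]
  rw [lintegral_finset_sum _ (fun i _ =>
    (measurable_const.indicator (box_meas d n i)))]
  refine Finset.sum_congr rfl fun i _ => ?_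
  rw [lintegral_indicator (box_meas d n i), setLIntegral_const,
    Measure.restrict_apply (box_meas d n i)]

lemma box_inter_grid_vol (d n : ℕ) (hn : 0 < n) (i : Fin d → Fin n) (k : Fin d → ℕ) :
    volume (box d n i ∩ Set.univ.pi fun ℓ => Set.Iic ((k ℓ : ℝ)/n))
      = if ∀ ℓ, (i ℓ).val < k ℓ then ENNReal.ofReal (1/n) ^ d else 0 := by
  rw [box, ← Set.pi_inter_distrib, volume_pi_pi]
  split
  · rename_i h
    rw [Finset.prod_congr rfl (fun ℓ _ => by
      rw [intA_inter_full n hn _ _ (h ℓ), intA_vol n hn])]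
    simp [Finset.prod_const]
  · rename_i h
    push_neg at h
    obtain ⟨ℓ, hℓ⟩ := h
    exact Finset.prod_eq_zero (Finset.mem_univ ℓ) (intA_inter_null n hn _ _ (by omega))

lemma le_set_eq (d : ℕ) (c : Fin d → ℝ) :
    {u : Fin d → ℝ | ∀ ℓ, u ℓ ≤ c ℓ} = Set.univ.pi fun ℓ => Set.Iic (c ℓ) := by
  ext u; simp [Set.mem_univ_pi, Set.mem_Iic]; rfl

lemma Q_grid (d n : ℕ) (hn : 0 < n) (P : Measure (Fin d → ℝ)) [IsProbabilityMeasure P]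
    (k : Fin d → ℕ) :
    checkMeasure d n (fun i => (P (box d n i)).toReal)
      {u : Fin d → ℝ | ∀ ℓ, u ℓ ≤ (k ℓ : ℝ)/n}
    = ∑ i ∈ Finset.univ.filter (fun i : Fin d → Fin n => ∀ ℓ, (i ℓ).val < k ℓ),
        P (box d n i) := by
  classical
  have hn' : (n:ℝ) ≠ 0 := by exact_mod_cast hn.ne'
  rw [le_set_eq]
  rw [checkMeasure_apply d n _ (fun i => ENNReal.toReal_nonneg) _
    (MeasurableSet.univ_pi fun ℓ => measurableSet_Iic)]
  rw [Finset.sum_filter]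
  refine Finset.sum_congr rfl fun i _ => ?_
  rw [box_inter_grid_vol d n hn]
  by_cases h : ∀ ℓ, (i ℓ).val < k ℓ
  · rw [if_pos h, if_pos h]
    rw [← ENNReal.ofReal_pow (by positivity), ← ENNReal.ofReal_mul (by positivity)]
    have heq : (n:ℝ)^d * (P (box d n i)).toReal * (1/n)^d = (P (box d n i)).toReal := by
      rw [mul_comm ((n:ℝ)^d), mul_assoc, ← mul_pow, mul_one_div_cancel hn', one_pow, mul_one]
    rw [heq, ENNReal.ofReal_toReal (measure_ne_top P _)]
  · rw [if_neg h, if_neg h, mul_zero]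

lemma P_coord_le_zero (d : ℕ) (P : Measure (Fin d → ℝ))
    (hmarg : ∀ ℓ : Fin d, P.map (fun v => v ℓ) = volume.restrict (Set.Icc (0 : ℝ) 1))
    (ℓ : Fin d) : P {u | u ℓ ≤ 0} = 0 := by
  have h1 : {u : Fin d → ℝ | u ℓ ≤ 0} = (fun v : Fin d → ℝ => v ℓ) ⁻¹' (Set.Iic 0) := rfl
  rw [h1, ← Measure.map_apply (measurable_pi_apply ℓ) measurableSet_Iic, hmarg ℓ,
    Measure.restrict_apply measurableSet_Iic]
  refine measure_mono_null (t := {(0:ℝ)}) ?_ (by simp)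
  intro x hx
  simp only [Set.mem_inter_iff, Set.mem_Iic, Set.mem_Icc] at hx
  simp [le_antisymm hx.1 hx.2.1]

lemma P_coord_neg (d : ℕ) (P : Measure (Fin d → ℝ))
    (hmarg : ∀ ℓ : Fin d, P.map (fun v => v ℓ) = volume.restrict (Set.Icc (0 : ℝ) 1))
    (ℓ : Fin d) : P {u | u ℓ < 0} = 0 := by
  refine measure_mono_null (t := {u : Fin d → ℝ | u ℓ ≤ 0}) ?_ (P_coord_le_zero d P hmarg ℓ)
  intro u hu
  have hu' : u ℓ < 0 := hu
  exact le_of_lt hu'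

lemma P_strip (d : ℕ) (P : Measure (Fin d → ℝ))
    (hmarg : ∀ ℓ : Fin d, P.map (fun v => v ℓ) = volume.restrict (Set.Icc (0 : ℝ) 1))
    (ℓ : Fin d) (a b : ℝ) :
    P {u | u ℓ ∈ Set.Ioc a b} ≤ ENNReal.ofReal (b - a) := by
  have h1 : {u : Fin d → ℝ | u ℓ ∈ Set.Ioc a b} = (fun v : Fin d → ℝ => v ℓ) ⁻¹' (Set.Ioc a b) := rfl
  rw [h1, ← Measure.map_apply (measurable_pi_apply ℓ) measurableSet_Ioc, hmarg ℓ,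
    Measure.restrict_apply measurableSet_Ioc]
  calc volume (Set.Ioc a b ∩ Set.Icc 0 1) ≤ volume (Set.Ioc a b) :=
        measure_mono Set.inter_subset_left
    _ = ENNReal.ofReal (b - a) := Real.volume_Ioc

lemma P_grid (d n : ℕ) (hn : 0 < n) (P : Measure (Fin d → ℝ)) [IsProbabilityMeasure P]
    (hmarg : ∀ ℓ : Fin d, P.map (fun v => v ℓ) = volume.restrict (Set.Icc (0 : ℝ) 1))
    (k : Fin d → ℕ) (hk : ∀ ℓ, k ℓ ≤ n) :
    P {u : Fin d → ℝ | ∀ ℓ, u ℓ ≤ (k ℓ : ℝ)/n}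
    = ∑ i ∈ Finset.univ.filter (fun i : Fin d → Fin n => ∀ ℓ, (i ℓ).val < k ℓ),
        P (box d n i) := by
  classical
  by_cases hz : ∃ ℓ, k ℓ = 0
  · obtain ⟨ℓ, hℓ⟩ := hz
    have h1 : P {u : Fin d → ℝ | ∀ ℓ', u ℓ' ≤ (k ℓ' : ℝ)/n} = 0 := by
      refine measure_mono_null (t := {u : Fin d → ℝ | u ℓ ≤ 0}) ?_ (P_coord_le_zero d P hmarg ℓ)
      intro u hu
      have := hu ℓ
      rw [hℓ] at this
      simpa using this
    have h2 : Finset.univ.filter (fun i : Fin d → Fin n => ∀ ℓ', (i ℓ').val < k ℓ') = ∅ := by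
      refine Finset.filter_eq_empty_iff.2 fun i _ => ?_
      intro hall
      have := hall ℓ
      omega
    rw [h1, h2, Finset.sum_empty]
  · push_neg at hz
    have hpi : (Set.univ.pi fun ℓ => Set.Icc (0:ℝ) ((k ℓ : ℝ)/n))
        = ⋃ i ∈ Finset.univ.filter (fun i : Fin d → Fin n => ∀ ℓ, (i ℓ).val < k ℓ),
            box d n i := by
      ext u
      simp only [Set.mem_pi, Set.mem_univ, forall_true_left, Set.mem_iUnion,
        Finset.mem_filter, Finset.mem_univ, true_and]
      constructor
      · intro hu
        have hchoice : ∀ ℓ, ∃ j : Fin n, j.val < k ℓ ∧ u ℓ ∈ intA n j := by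
          intro ℓ
          have heq := Icc_eq_union n hn (k ℓ) (Nat.one_le_iff_ne_zero.2 (hz ℓ)) (hk ℓ)
          have hm : u ℓ ∈ ⋃ (j : Fin n) (_ : j.val < k ℓ), intA n j := heq ▸ hu ℓ
          simpa [Set.mem_iUnion] using hm
        choose j hj1 hj2 using hchoice
        exact ⟨j, hj1, fun ℓ _ => hj2 ℓ⟩
      · rintro ⟨i, hi, hu⟩
        intro ℓ
        have hmem := hu ℓ trivial
        have hsub := intA_subset n (i ℓ) hmem
        refine ⟨hsub.1, le_trans hsub.2 ?_⟩
        gcongr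
        exact_mod_cast Nat.succ_le_of_lt (hi ℓ)
    have hPeq : P {u : Fin d → ℝ | ∀ ℓ, u ℓ ≤ (k ℓ : ℝ)/n}
        = P (Set.univ.pi fun ℓ => Set.Icc (0:ℝ) ((k ℓ : ℝ)/n)) := by
      apply le_antisymm
      · calc P {u : Fin d → ℝ | ∀ ℓ, u ℓ ≤ (k ℓ : ℝ)/n}
            ≤ P ((Set.univ.pi fun ℓ => Set.Icc (0:ℝ) ((k ℓ : ℝ)/n))
                ∪ ⋃ ℓ, {u : Fin d → ℝ | u ℓ < 0}) := by
              apply measure_mono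
              intro u hu
              by_cases hpos : ∀ ℓ, 0 ≤ u ℓ
              · exact Or.inl fun ℓ _ => ⟨hpos ℓ, hu ℓ⟩
              · push_neg at hpos
                obtain ⟨ℓ, hℓ⟩ := hpos
                exact Or.inr (Set.mem_iUnion.2 ⟨ℓ, hℓ⟩)
          _ ≤ P (Set.univ.pi fun ℓ => Set.Icc (0:ℝ) ((k ℓ : ℝ)/n))
                + P (⋃ ℓ, {u : Fin d → ℝ | u ℓ < 0}) := measure_union_le _ _
          _ = P (Set.univ.pi fun ℓ => Set.Icc (0:ℝ) ((k ℓ : ℝ)/n)) := by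
              rw [measure_iUnion_null fun ℓ => P_coord_neg d P hmarg ℓ, add_zero]
      · apply measure_mono
        intro u hu ℓ
        exact (hu ℓ trivial).2
    rw [hPeq, hpi, measure_biUnion_finset ?_ (fun i _ => box_meas d n i)]
    intro i _ i' _ hii'
    exact box_disjoint d n hn hii'

noncomputable def df (d : ℕ) (P : Measure (Fin d → ℝ)) (v : Fin d → ℝ) : ℝ :=
  (P {u | ∀ ℓ, u ℓ ≤ v ℓ}).toReal

/-- If `C` is the copula (distribution function) of a `d`-stochastic measure `P`
and `Č_n` the distribution function of its checkerboard approximation (the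
checkerboard measure whose skeleton is `i ↦ P (B_i)`), then
`sup_{v ∈ [0,1]^d} |Č_n(v) − C(v)| ≤ d / n`. -/
theorem checkerboard_approximation_uniform_error
    (d n : ℕ) (hd : 2 ≤ d) (hn : 2 ≤ n)
    (P : Measure (Fin d → ℝ)) [IsProbabilityMeasure P]
    (hmarg : ∀ ℓ : Fin d, P.map (fun v => v ℓ) = volume.restrict (Set.Icc (0 : ℝ) 1))
    (v : Fin d → ℝ) (hv : v ∈ Set.univ.pi fun _ : Fin d => Set.Icc (0 : ℝ) 1) :
    |df d (checkMeasure d n fun i => (P (box d n i)).toReal) v - df d P v| ≤ d / n := by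
  classical
  have hn0 : 0 < n := by omega
  have hn' : (0:ℝ) < n := by exact_mod_cast hn0
  set Q := checkMeasure d n fun i => (P (box d n i)).toReal with hQdef
  set k : Fin d → ℕ := fun ℓ => ⌊(n:ℝ) * v ℓ⌋₊ with hkdef
  set k' : Fin d → ℕ := fun ℓ => min (k ℓ + 1) n with hk'def
  have hv' : ∀ ℓ, 0 ≤ v ℓ ∧ v ℓ ≤ 1 := fun ℓ => hv ℓ trivial
  have hkn : ∀ ℓ, k ℓ ≤ n := by
    intro ℓ
    have h1 : (n:ℝ) * v ℓ ≤ (n:ℝ) := by nlinarith [(hv' ℓ).2, hn'.le, (hv' ℓ).1]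
    calc k ℓ = ⌊(n:ℝ) * v ℓ⌋₊ := rfl
      _ ≤ ⌊(n:ℝ)⌋₊ := Nat.floor_mono h1
      _ = n := Nat.floor_natCast n
  have hk'n : ∀ ℓ, k' ℓ ≤ n := fun ℓ => min_le_right _ _
  have hwv : ∀ ℓ, (k ℓ : ℝ)/n ≤ v ℓ := by
    intro ℓ
    rw [div_le_iff₀ hn']
    have h1 := Nat.floor_le (mul_nonneg hn'.le (hv' ℓ).1)
    calc (k ℓ : ℝ) = (⌊(n:ℝ) * v ℓ⌋₊ : ℝ) := rfl
      _ ≤ (n:ℝ) * v ℓ := h1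
      _ = v ℓ * n := by ring
  have hvw' : ∀ ℓ, v ℓ ≤ (k' ℓ : ℝ)/n := by
    intro ℓ
    rcases le_or_gt (k ℓ + 1) n with h | h
    · have hk'eq : k' ℓ = k ℓ + 1 := min_eq_left h
      rw [hk'eq, le_div_iff₀ hn']
      have h2 := Nat.lt_floor_add_one ((n:ℝ) * v ℓ)
      push_cast
      nlinarith [h2]
    · have hk'eq : k' ℓ = n := min_eq_right h.le
      rw [hk'eq]
      have hnn : (n:ℝ)/n = 1 := div_self hn'.ne'
      rw [hnn]
      exact (hv' ℓ).2
  have hlen : ∀ ℓ, (k' ℓ:ℝ)/n - (k ℓ:ℝ)/n ≤ 1/n := by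
    intro ℓ
    have h1 : (k' ℓ:ℝ) ≤ (k ℓ:ℝ) + 1 := by exact_mod_cast min_le_left _ _
    calc (k' ℓ:ℝ)/n - (k ℓ:ℝ)/n = ((k' ℓ:ℝ) - k ℓ)/n := by ring
      _ ≤ 1/n := by gcongr; linarith
  have hA : Q {u : Fin d → ℝ | ∀ ℓ, u ℓ ≤ (k ℓ:ℝ)/n}
      = P {u : Fin d → ℝ | ∀ ℓ, u ℓ ≤ (k ℓ:ℝ)/n} := by
    rw [hQdef, Q_grid d n hn0 P k, P_grid d n hn0 P hmarg k hkn]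
  have hB : Q {u : Fin d → ℝ | ∀ ℓ, u ℓ ≤ (k' ℓ:ℝ)/n}
      = P {u : Fin d → ℝ | ∀ ℓ, u ℓ ≤ (k' ℓ:ℝ)/n} := by
    rw [hQdef, Q_grid d n hn0 P k', P_grid d n hn0 P hmarg k' hk'n]
  set a := P {u : Fin d → ℝ | ∀ ℓ, u ℓ ≤ (k ℓ:ℝ)/n} with ha
  set b := P {u : Fin d → ℝ | ∀ ℓ, u ℓ ≤ (k' ℓ:ℝ)/n} with hb
  have hsub1 : {u : Fin d → ℝ | ∀ ℓ, u ℓ ≤ (k ℓ:ℝ)/n} ⊆ {u : Fin d → ℝ | ∀ ℓ, u ℓ ≤ v ℓ} :=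
    fun u hu ℓ => le_trans (hu ℓ) (hwv ℓ)
  have hsub2 : {u : Fin d → ℝ | ∀ ℓ, u ℓ ≤ v ℓ} ⊆ {u : Fin d → ℝ | ∀ ℓ, u ℓ ≤ (k' ℓ:ℝ)/n} :=
    fun u hu ℓ => le_trans (hu ℓ) (hvw' ℓ)
  have hQ1 : a ≤ Q {u : Fin d → ℝ | ∀ ℓ, u ℓ ≤ v ℓ} := hA ▸ measure_mono hsub1
  have hQ2 : Q {u : Fin d → ℝ | ∀ ℓ, u ℓ ≤ v ℓ} ≤ b := hB ▸ measure_mono hsub2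
  have hP1 : a ≤ P {u : Fin d → ℝ | ∀ ℓ, u ℓ ≤ v ℓ} := measure_mono hsub1
  have hP2 : P {u : Fin d → ℝ | ∀ ℓ, u ℓ ≤ v ℓ} ≤ b := measure_mono hsub2
  have hstrip : b ≤ a + (d : ENNReal) * ENNReal.ofReal (1/n) := by
    calc b ≤ P ({u : Fin d → ℝ | ∀ ℓ, u ℓ ≤ (k ℓ:ℝ)/n}
            ∪ ⋃ ℓ, {u : Fin d → ℝ | u ℓ ∈ Set.Ioc ((k ℓ:ℝ)/n) ((k' ℓ:ℝ)/n)}) := by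
          apply measure_mono
          intro u hu
          by_cases hin : ∀ ℓ, u ℓ ≤ (k ℓ:ℝ)/n
          · exact Or.inl hin
          · push_neg at hin
            obtain ⟨ℓ, hℓ⟩ := hin
            exact Or.inr (Set.mem_iUnion.2 ⟨ℓ, hℓ, hu ℓ⟩)
      _ ≤ a + P (⋃ ℓ, {u : Fin d → ℝ | u ℓ ∈ Set.Ioc ((k ℓ:ℝ)/n) ((k' ℓ:ℝ)/n)}) :=
          measure_union_le _ _
      _ ≤ a + (d : ENNReal) * ENNReal.ofReal (1/n) := by
          gcongr
          calc P (⋃ ℓ, {u : Fin d → ℝ | u ℓ ∈ Set.Ioc ((k ℓ:ℝ)/n) ((k' ℓ:ℝ)/n)})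
              ≤ ∑ ℓ : Fin d, P {u : Fin d → ℝ | u ℓ ∈ Set.Ioc ((k ℓ:ℝ)/n) ((k' ℓ:ℝ)/n)} :=
                measure_iUnion_fintype_le _ _
            _ ≤ ∑ ℓ : Fin d, ENNReal.ofReal (1/n) := by
                apply Finset.sum_le_sum
                intro ℓ _
                calc P {u : Fin d → ℝ | u ℓ ∈ Set.Ioc ((k ℓ:ℝ)/n) ((k' ℓ:ℝ)/n)}
                    ≤ ENNReal.ofReal ((k' ℓ:ℝ)/n - (k ℓ:ℝ)/n) := P_strip d P hmarg ℓ _ _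
                  _ ≤ ENNReal.ofReal (1/n) := ENNReal.ofReal_le_ofReal (hlen ℓ)
            _ = (d : ENNReal) * ENNReal.ofReal (1/n) := by
                rw [Finset.sum_const, Finset.card_univ, Fintype.card_fin, nsmul_eq_mul]
  have hfin : ∀ s : Set (Fin d → ℝ), P s ≠ ⊤ := fun s => measure_ne_top P s
  have hQfin : Q {u : Fin d → ℝ | ∀ ℓ, u ℓ ≤ v ℓ} ≠ ⊤ := ne_top_of_le_ne_top (hfin _) hQ2
  have h1 : a.toReal ≤ (Q {u : Fin d → ℝ | ∀ ℓ, u ℓ ≤ v ℓ}).toReal :=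
    ENNReal.toReal_mono hQfin hQ1
  have h2 : (Q {u : Fin d → ℝ | ∀ ℓ, u ℓ ≤ v ℓ}).toReal ≤ b.toReal :=
    ENNReal.toReal_mono (hfin _) hQ2
  have h3 : a.toReal ≤ (P {u : Fin d → ℝ | ∀ ℓ, u ℓ ≤ v ℓ}).toReal :=
    ENNReal.toReal_mono (hfin _) hP1
  have h4 : (P {u : Fin d → ℝ | ∀ ℓ, u ℓ ≤ v ℓ}).toReal ≤ b.toReal :=
    ENNReal.toReal_mono (hfin _) hP2
  have h5 : b.toReal ≤ a.toReal + (d:ℝ)/n := by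
    have hne : a + (d : ENNReal) * ENNReal.ofReal (1/n) ≠ ⊤ :=
      ENNReal.add_ne_top.2 ⟨hfin _, ENNReal.mul_ne_top (ENNReal.natCast_ne_top d)
        ENNReal.ofReal_ne_top⟩
    have := ENNReal.toReal_mono hne hstrip
    rw [ENNReal.toReal_add (hfin _) (ENNReal.mul_ne_top (ENNReal.natCast_ne_top d)
      ENNReal.ofReal_ne_top), ENNReal.toReal_mul, ENNReal.toReal_ofReal (by positivity),
      ENNReal.toReal_natCast] at this
    calc b.toReal ≤ a.toReal + (d:ℝ) * (1/n) := this
      _ = a.toReal + (d:ℝ)/n := by ring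
  rw [df, df, abs_sub_le_iff]
  constructor <;> linarith
end

section
/- Let q† be a probability array on [n]^d, {B_1,…,B_b} a partition of [n]^d, and a_1,…,a_b ∈ [0,1] with Σ a_k = 1 and a_k = 0 whenever B_k ∩ supp(q†) = ∅. Then the I-projection q* of q† on the set E' = ∩_k {p : Σ_{i∈B_k} p_i = a_k} exists, is unique, and is given by the scaling q*_i = q†_i · a_k / (Σ_{i'∈B_k} q†_{i'}) for i ∈ B_k ∩ supp(q†), and q*_i = 0 otherwise. -/
open MeasureTheory Real BigOperators ENNReal

def IsProbArray {d n : ℕ} (p : (Fin d → Fin n) → ℝ) : Prop :=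
  (∀ i, 0 ≤ p i) ∧ ∑ i : Fin d → Fin n, p i = 1

noncomputable def klArr {d n : ℕ} (p q : (Fin d → Fin n) → ℝ) : ℝ≥0∞ :=
  open scoped Classical in
  if ∀ i, q i = 0 → p i = 0
  then ENNReal.ofReal (∑ i : Fin d → Fin n, p i * Real.log (p i / q i)) else ⊤

lemma gibbs_pt {p q : ℝ} (hp : 0 ≤ p) (hq : 0 ≤ q) (hac : q = 0 → p = 0) :
    p - q ≤ p * Real.log (p / q) := by
  rcases eq_or_lt_of_le hq with h0 | hqpos
  · have hp0 := hac h0.symm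
    simp [hp0, ← h0]
  rcases eq_or_lt_of_le hp with h0 | hppos
  · simp [← h0]; linarith
  have h1 : Real.log (q / p) ≤ q / p - 1 := Real.log_le_sub_one_of_pos (div_pos hqpos hppos)
  have h2 : Real.log (p / q) = - Real.log (q / p) := by
    rw [← Real.log_inv]; congr 1; field_simp
  have h3 : p * (q / p) = q := by field_simp
  rw [h2]
  nlinarith [mul_le_mul_of_nonneg_left h1 (le_of_lt hppos)]

lemma gibbs_pt_strict {p q : ℝ} (hp : 0 ≤ p) (hq : 0 ≤ q) (hac : q = 0 → p = 0)
    (hne : p ≠ q) : p - q < p * Real.log (p / q) := by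
  rcases eq_or_lt_of_le hq with h0 | hqpos
  · exact absurd ((hac h0.symm).trans h0) hne
  rcases eq_or_lt_of_le hp with h0 | hppos
  · simp [← h0]; linarith
  have hne1 : q / p ≠ 1 := by
    intro h
    rw [div_eq_one_iff_eq (ne_of_gt hppos)] at h
    exact hne h.symm
  have h1 : Real.log (q / p) < q / p - 1 :=
    Real.log_lt_sub_one_of_pos (div_pos hqpos hppos) hne1
  have h2 : Real.log (p / q) = - Real.log (q / p) := by
    rw [← Real.log_inv]; congr 1; field_simp
  have h3 : p * (q / p) = q := by field_simp
  rw [h2]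
  nlinarith [mul_lt_mul_of_pos_left h1 hppos]

lemma gibbs_sum_nonneg {ι : Type*} [Fintype ι] (p q : ι → ℝ)
    (hp : ∀ i, 0 ≤ p i) (hq : ∀ i, 0 ≤ q i) (hac : ∀ i, q i = 0 → p i = 0)
    (hsum : ∑ i, p i = ∑ i, q i) :
    0 ≤ ∑ i, p i * Real.log (p i / q i) := by
  have h : ∑ i, (p i - q i) ≤ ∑ i, p i * Real.log (p i / q i) :=
    Finset.sum_le_sum fun i _ => gibbs_pt (hp i) (hq i) (hac i)
  rwa [Finset.sum_sub_distrib, hsum, sub_self] at h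

lemma gibbs_sum_eq {ι : Type*} [Fintype ι] (p q : ι → ℝ)
    (hp : ∀ i, 0 ≤ p i) (hq : ∀ i, 0 ≤ q i) (hac : ∀ i, q i = 0 → p i = 0)
    (hsum : ∑ i, p i = ∑ i, q i)
    (h : ∑ i, p i * Real.log (p i / q i) ≤ 0) : p = q := by
  by_contra hne
  obtain ⟨j, hj⟩ : ∃ j, p j ≠ q j := by
    by_contra hc; push_neg at hc; exact hne (funext hc)
  have hlt : ∑ i, (p i - q i) < ∑ i, p i * Real.log (p i / q i) :=
    Finset.sum_lt_sum (fun i _ => gibbs_pt (hp i) (hq i) (hac i))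
      ⟨j, Finset.mem_univ j, gibbs_pt_strict (hp j) (hq j) (hac j) hj⟩
  rw [Finset.sum_sub_distrib, hsum, sub_self] at hlt
  linarith

lemma klArr_of_ac {d n : ℕ} {p q : (Fin d → Fin n) → ℝ} (h : ∀ i, q i = 0 → p i = 0) :
    klArr p q = ENNReal.ofReal (∑ i : Fin d → Fin n, p i * Real.log (p i / q i)) := by
  rw [klArr, if_pos h]

lemma klArr_of_not_ac {d n : ℕ} {p q : (Fin d → Fin n) → ℝ} (h : ¬ ∀ i, q i = 0 → p i = 0) :
    klArr p q = ⊤ := by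
  rw [klArr, if_neg h]

/-- The `I`-projection of a probability array on the set determined by a
partition `B_1, …, B_b` and block masses `a_1, …, a_b` exists, is unique, and
is given by blockwise scaling. -/
theorem Iprojection_on_partition_constraints
    (d n b : ℕ) (hd : 2 ≤ d) (hn : 2 ≤ n)
    (qd : (Fin d → Fin n) → ℝ) (hqd : IsProbArray qd)
    (B : Fin b → Finset (Fin d → Fin n))
    (hBdisj : ∀ k k', k ≠ k' → Disjoint (B k) (B k'))
    (hBcover : ∀ i, ∃ k, i ∈ B k)
    (a : Fin b → ℝ) (ha0 : ∀ k, 0 ≤ a k) (ha1 : ∀ k, a k ≤ 1)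
    (hasum : ∑ k, a k = 1)
    (hanull : ∀ k, (∀ i ∈ B k, qd i = 0) → a k = 0)
    (E' : Set ((Fin d → Fin n) → ℝ))
    (hE' : E' = {p | IsProbArray p ∧ ∀ k, ∑ i ∈ B k, p i = a k})
    (qs : (Fin d → Fin n) → ℝ)
    (hqs : qs = fun i => qd i * ∑ k, if i ∈ B k then a k / (∑ i' ∈ B k, qd i') else 0) :
    qs ∈ E' ∧
    (∀ p ∈ E', klArr qs qd ≤ klArr p qd) ∧
    (∀ p ∈ E', (∀ p' ∈ E', klArr p qd ≤ klArr p' qd) → p = qs) := by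
  classical
  obtain ⟨hqd0, hqd1⟩ := hqd
  set Q : Fin b → ℝ := fun k => ∑ i' ∈ B k, qd i' with hQ
  set c : Fin b → ℝ := fun k => a k / Q k with hc
  have hQ0 : ∀ k, 0 ≤ Q k := fun k => Finset.sum_nonneg fun i _ => hqd0 i
  have hc0 : ∀ k, 0 ≤ c k := fun k => div_nonneg (ha0 k) (hQ0 k)
  have hQzero : ∀ k, Q k = 0 → (a k = 0 ∧ ∀ i ∈ B k, qd i = 0) := by
    intro k hk
    have hz : ∀ i ∈ B k, qd i = 0 :=
      (Finset.sum_eq_zero_iff_of_nonneg fun i _ => hqd0 i).mp hk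
    exact ⟨hanull k hz, hz⟩
  -- pointwise formula for qs
  have hqsF : ∀ i k, i ∈ B k → qs i = qd i * c k := by
    intro i k hik
    rw [hqs]
    show qd i * (∑ k' : Fin b, if i ∈ B k' then a k' / (∑ i' ∈ B k', qd i') else 0)
      = qd i * c k
    congr 1
    rw [Finset.sum_eq_single_of_mem k (Finset.mem_univ k)]
    · rw [if_pos hik]
    · intro k' _ hne
      rw [if_neg]
      exact fun hik' => (Finset.disjoint_left.mp (hBdisj k' k hne)) hik' hik
  have hqs0 : ∀ i, 0 ≤ qs i := by
    intro i
    obtain ⟨k, hk⟩ := hBcover i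
    rw [hqsF i k hk]
    exact mul_nonneg (hqd0 i) (hc0 k)
  -- qs is absolutely continuous w.r.t. qd
  have hqsac : ∀ i, qd i = 0 → qs i = 0 := by
    intro i h
    obtain ⟨k, hk⟩ := hBcover i
    rw [hqsF i k hk, h, zero_mul]
  -- block sums of qs
  have hblocksum : ∀ k, ∑ i ∈ B k, qs i = a k := by
    intro k
    have h1 : ∑ i ∈ B k, qs i = Q k * c k := by
      rw [hQ, Finset.sum_mul]
      exact Finset.sum_congr rfl fun i hi => hqsF i k hi
    rw [h1]
    rcases eq_or_ne (Q k) 0 with h | h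
    · rw [h, zero_mul, (hQzero k h).1]
    · rw [hc]; field_simp
  -- partition sum formula
  have hpart : ∀ f : (Fin d → Fin n) → ℝ, ∑ i, f i = ∑ k, ∑ i ∈ B k, f i := by
    intro f
    have hdisj : ((Finset.univ : Finset (Fin b)) : Set (Fin b)).PairwiseDisjoint B := by
      intro k _ k' _ hne
      exact hBdisj k k' hne
    rw [← Finset.sum_biUnion hdisj]
    congr 1
    ext i
    simp only [Finset.mem_biUnion, Finset.mem_univ, true_and]
    exact iff_of_true trivial (hBcover i)
  have hqssum : ∑ i, qs i = 1 := by
    rw [hpart qs]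
    simp only [hblocksum]
    exact hasum
  have hqsE : qs ∈ E' := by
    rw [hE']
    exact ⟨⟨hqs0, hqssum⟩, hblocksum⟩
  -- decomposition lemma
  have hdecomp : ∀ p : (Fin d → Fin n) → ℝ, (∀ i, 0 ≤ p i) →
      (∀ k, ∑ i ∈ B k, p i = a k) → (∀ i, qd i = 0 → p i = 0) →
      (∀ i, qs i = 0 → p i = 0) ∧
      ∑ i, p i * Real.log (p i / qd i) =
        (∑ i, p i * Real.log (p i / qs i)) + ∑ k, a k * Real.log (c k) := by
    intro p hp0 hpblk hpac
    have hpacs : ∀ i, qs i = 0 → p i = 0 := by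
      intro i h
      obtain ⟨k, hk⟩ := hBcover i
      rw [hqsF i k hk] at h
      rcases mul_eq_zero.mp h with h | h
      · exact hpac i h
      · rcases div_eq_zero_iff.mp h with h | h
        · -- a k = 0, so block sum of p is 0
          have hs : ∑ i' ∈ B k, p i' = 0 := by rw [hpblk k, h]
          exact (Finset.sum_eq_zero_iff_of_nonneg fun i' _ => hp0 i').mp hs i hk
        · exact hpac i ((hQzero k h).2 i hk)
    refine ⟨hpacs, ?_⟩
    have hpt : ∀ i, p i * Real.log (p i / qd i) =
        p i * Real.log (p i / qs i) +
        p i * (∑ k, if i ∈ B k then Real.log (c k) else 0) := by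
      intro i
      obtain ⟨k, hk⟩ := hBcover i
      have hsum1 : (∑ k', if i ∈ B k' then Real.log (c k') else 0) = Real.log (c k) := by
        rw [Finset.sum_eq_single_of_mem k (Finset.mem_univ k)]
        · rw [if_pos hk]
        · intro k' _ hne
          rw [if_neg]
          exact fun hik' => (Finset.disjoint_left.mp (hBdisj k' k hne)) hik' hk
      rw [hsum1]
      rcases eq_or_ne (p i) 0 with hpi | hpi
      · simp [hpi]
      · have hqdi : qd i ≠ 0 := fun h => hpi (hpac i h)
        have hqsi : qs i ≠ 0 := fun h => hpi (hpacs i h)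
        have hck : c k ≠ 0 := by
          intro h
          apply hqsi
          rw [hqsF i k hk, h, mul_zero]
        have hq : qs i = qd i * c k := hqsF i k hk
        have hdiv : p i / qd i = (p i / qs i) * c k := by
          rw [hq]; field_simp
        rw [hdiv, Real.log_mul (div_ne_zero hpi hqsi) hck, mul_add]
    calc ∑ i, p i * Real.log (p i / qd i)
        = ∑ i, (p i * Real.log (p i / qs i) +
            p i * (∑ k, if i ∈ B k then Real.log (c k) else 0)) :=
          Finset.sum_congr rfl fun i _ => hpt i
      _ = (∑ i, p i * Real.log (p i / qs i)) +
            ∑ i, p i * (∑ k, if i ∈ B k then Real.log (c k) else 0) := by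
          rw [Finset.sum_add_distrib]
      _ = (∑ i, p i * Real.log (p i / qs i)) + ∑ k, a k * Real.log (c k) := by
          congr 1
          have : ∀ i, p i * (∑ k, if i ∈ B k then Real.log (c k) else 0)
              = ∑ k, if i ∈ B k then p i * Real.log (c k) else 0 := by
            intro i
            rw [Finset.mul_sum]
            exact Finset.sum_congr rfl fun k _ => by split_ifs <;> simp
          simp only [this]
          rw [Finset.sum_comm]
          refine Finset.sum_congr rfl fun k _ => ?_
          rw [← Finset.sum_filter, Finset.filter_mem_eq_inter, Finset.univ_inter,
            ← Finset.sum_mul, hpblk k]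
  -- the value S of the projection
  have hSval : ∑ i, qs i * Real.log (qs i / qd i) = ∑ k, a k * Real.log (c k) := by
    have h := (hdecomp qs hqs0 hblocksum hqsac).2
    have hz : ∑ i, qs i * Real.log (qs i / qs i) = 0 := by
      apply Finset.sum_eq_zero
      intro i _
      rcases eq_or_ne (qs i) 0 with h | h
      · rw [h, zero_mul]
      · rw [div_self h, Real.log_one, mul_zero]
    rw [hz, zero_add] at h
    exact h
  have hS0 : 0 ≤ ∑ i, qs i * Real.log (qs i / qd i) :=
    gibbs_sum_nonneg qs qd hqs0 hqd0 hqsac (by rw [hqssum, hqd1])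
  refine ⟨hqsE, ?_, ?_⟩
  · -- minimality
    intro p hp
    rw [hE'] at hp
    obtain ⟨⟨hp0, hp1⟩, hpblk⟩ := hp
    by_cases hpac : ∀ i, qd i = 0 → p i = 0
    · rw [klArr_of_ac hqsac, klArr_of_ac hpac]
      apply ENNReal.ofReal_le_ofReal
      obtain ⟨hpacs, hdec⟩ := hdecomp p hp0 hpblk hpac
      have hG : 0 ≤ ∑ i, p i * Real.log (p i / qs i) :=
        gibbs_sum_nonneg p qs hp0 hqs0 hpacs (by rw [hp1, hqssum])
      rw [hdec, hSval]
      linarith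
    · rw [klArr_of_not_ac hpac]
      exact le_top
  · -- uniqueness
    intro p hp hmin
    have hple := hmin qs hqsE
    rw [hE'] at hp
    obtain ⟨⟨hp0, hp1⟩, hpblk⟩ := hp
    rw [klArr_of_ac hqsac] at hple
    by_cases hpac : ∀ i, qd i = 0 → p i = 0
    · rw [klArr_of_ac hpac] at hple
      obtain ⟨hpacs, hdec⟩ := hdecomp p hp0 hpblk hpac
      have hG : 0 ≤ ∑ i, p i * Real.log (p i / qs i) :=
        gibbs_sum_nonneg p qs hp0 hqs0 hpacs (by rw [hp1, hqssum])
      have hS0' : 0 ≤ ∑ k, a k * Real.log (c k) := hSval ▸ hS0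
      have hT0 : 0 ≤ ∑ i, p i * Real.log (p i / qd i) := by
        rw [hdec]; linarith
      have hTS : ∑ i, p i * Real.log (p i / qd i) ≤ ∑ i, qs i * Real.log (qs i / qd i) :=
        (ENNReal.ofReal_le_ofReal_iff hS0).mp hple
      have hGle : ∑ i, p i * Real.log (p i / qs i) ≤ 0 := by
        rw [hdec, hSval] at hTS
        linarith
      exact gibbs_sum_eq p qs hp0 hqs0 hpacs (by rw [hp1, hqssum]) hGle
    · rw [klArr_of_not_ac hpac] at hple
      exact absurd (top_le_iff.mp hple) (by simp)
end
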